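/- (Persistence of excitation of a delayed signal, Lemma A(b)) Let X be a real Hilbert space, Y a real normed space, g : ℝ → X continuous, and P : X → Y a bounded linear operator. If the restriction of g to [0,∞) is PE with respect to P, then for every delay d ≥ 0 the delayed signal t ↦ g(t−d), t ∈ [0,∞), is also PE with respect to P. -/

import Mathlib

open Set

/-- `g` (restricted to `[0,∞)`) is persistently exciting with respect to the bounded linear
operator `P` with constants `(T, κ)`. -/
def IsPEWith {X : Type*} [NormedAddCommGroup X] [InnerProductSpace ℝ X]
    {Y : Type*} [NormedAddCommGroup Y] [NormedSpace ℝ Y]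
    (g : ℝ → X) (P : X →L[ℝ] Y) (T κ : ℝ) : Prop :=
  0 < T ∧ 0 < κ ∧
    ∀ x : X, ∀ t : ℝ, 0 ≤ t →
      κ * ‖P x‖ ^ 2 ≤ ∫ τ in t..(t + T), (inner ℝ (g τ) x : ℝ) ^ 2

/-- `g` (restricted to `[0,∞)`) is persistently exciting with respect to `P`. -/
def IsPE {X : Type*} [NormedAddCommGroup X] [InnerProductSpace ℝ X]
    {Y : Type*} [NormedAddCommGroup Y] [NormedSpace ℝ Y]
    (g : ℝ → X) (P : X →L[ℝ] Y) : Prop :=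
  ∃ T κ : ℝ, IsPEWith g P T κ

/-- **Persistence of excitation of a delayed signal** (Lemma A(b)).
If `g : ℝ → X` is continuous and its restriction to `[0,∞)` is PE with respect to `P`, then
for every delay `d ≥ 0` the delayed signal `t ↦ g (t - d)` is also PE with respect to `P`. -/
theorem pe_delayed_signal
    {X : Type*} [NormedAddCommGroup X] [InnerProductSpace ℝ X] [CompleteSpace X]
    {Y : Type*} [NormedAddCommGroup Y] [NormedSpace ℝ Y]
    (g : ℝ → X) (hg : Continuous g)
    (P : X →L[ℝ] Y) (hPE : IsPE g P) :
    ∀ d : ℝ, 0 ≤ d → IsPE (fun t => g (t - d)) P := by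
  intro d hd
  obtain ⟨T, κ, hT, hκ, hbound⟩ := hPE
  refine ⟨T + d, κ, by linarith, hκ, ?_⟩
  intro x t ht
  have hcont : Continuous fun τ : ℝ => (inner ℝ (g τ) x : ℝ) ^ 2 :=
    ((continuous_inner.comp (hg.prodMk continuous_const)).pow 2)
  have hsub : (∫ τ in t..(t + (T + d)), (inner ℝ (g (τ - d)) x : ℝ) ^ 2)
      = ∫ τ in (t - d)..(t + (T + d) - d), (inner ℝ (g τ) x : ℝ) ^ 2 :=
    intervalIntegral.integral_comp_sub_right (fun τ => (inner ℝ (g τ) x : ℝ) ^ 2) d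
  have heq : t + (T + d) - d = t + T := by ring
  rw [hsub, heq]
  have hsplit : (∫ τ in (t - d)..(t + T), (inner ℝ (g τ) x : ℝ) ^ 2)
      = (∫ τ in (t - d)..t, (inner ℝ (g τ) x : ℝ) ^ 2)
        + ∫ τ in t..(t + T), (inner ℝ (g τ) x : ℝ) ^ 2 := by
    rw [intervalIntegral.integral_add_adjacent_intervals
      (hcont.intervalIntegrable _ _) (hcont.intervalIntegrable _ _)]
  have hnonneg : 0 ≤ ∫ τ in (t - d)..t, (inner ℝ (g τ) x : ℝ) ^ 2 :=
    intervalIntegral.integral_nonneg (by linarith) (fun τ _ => sq_nonneg _)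
  have := hbound x t ht
  linarith [hsplit, hnonneg, this]
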